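/- Let k be a field of characteristic zero, C a coassociative, counital, cocommutative coalgebra over k coaugmented by a grouplike element 1, C̄ = ker ε with reduced comultiplication Δ̄, and L a Lie algebra over k; equip Hom_k(C̄, L) with the reduced convolution bracket [f, g] := β ∘ (f ⊗ g) ∘ Δ̄. If L is nilpotent of nilpotency class at most n (F^{n+1} L = 0), then the Lie algebra Hom_k(C̄, L) is nilpotent of nilpotency class at most n (F^{n+1} Hom_k(C̄, L) = 0). -/
import Mathlib


/-!
STATEMENT 10: With `C̄ = ker ε` and the reduced convolution bracket on `Hom_k(C̄, L)`: if `L`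
is nilpotent of class `≤ n` (`F^(n+1) L = 0`) then so is `Hom_k(C̄, L)`
(`F^(n+1) Hom_k(C̄, L) = 0`).  Here `lcsF k b m` denotes `F^(m+1)` for the bracket `b`.
-/

open TensorProduct

/-- The Lie bracket of `L`, as a linear map `L ⊗ L → L`. -/
noncomputable def lieBeta (k L : Type*) [Field k] [LieRing L] [LieAlgebra k L] :
    L ⊗[k] L →ₗ[k] L :=
  TensorProduct.lift
    (LinearMap.mk₂ k (fun x y => ⁅x, y⁆) add_lie smul_lie lie_add lie_smul)

/-- The reduced comultiplication `c ↦ Δ c − c ⊗ e − e ⊗ c`, as a map on all of `C`. -/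
noncomputable def redComul (k : Type*) {C : Type*} [Field k]
    [AddCommGroup C] [Module k C] [Coalgebra k C] (e : C) : C →ₗ[k] C ⊗[k] C :=
  Coalgebra.comul - (TensorProduct.mk k C C).flip e - TensorProduct.mk k C C e

/-- The reduced convolution bracket `β ∘ (f ⊗ g) ∘ Δ̄` on `Hom_k(C̄, L)`,
for a given reduced comultiplication `Δbar : C̄ → C̄ ⊗ C̄`. -/
noncomputable def redConvBr {k C L : Type*} [Field k]
    [AddCommGroup C] [Module k C] [Coalgebra k C] [LieRing L] [LieAlgebra k L]
    (Δbar : ↥(LinearMap.ker (Coalgebra.counit : C →ₗ[k] k)) →ₗ[k]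
      (↥(LinearMap.ker (Coalgebra.counit : C →ₗ[k] k)) ⊗[k]
        ↥(LinearMap.ker (Coalgebra.counit : C →ₗ[k] k))))
    (f g : ↥(LinearMap.ker (Coalgebra.counit : C →ₗ[k] k)) →ₗ[k] L) :
    ↥(LinearMap.ker (Coalgebra.counit : C →ₗ[k] k)) →ₗ[k] L :=
  lieBeta k L ∘ₗ TensorProduct.map f g ∘ₗ Δbar

/-- The lower central series of a bracket `b` on a `k`-module `M`:
`lcsF k b 0 = F¹ M = M` and `lcsF k b (n+1) = F^(n+2) M = [M, F^(n+1) M]`. -/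
def lcsF (k : Type*) {M : Type*} [Field k] [AddCommGroup M] [Module k M]
    (b : M → M → M) : ℕ → Submodule k M
  | 0 => ⊤
  | n + 1 => Submodule.span k {m | ∃ x y, y ∈ lcsF k b n ∧ m = b x y}

lemma lcsF_eval_mem {k C L : Type*} [Field k]
    [AddCommGroup C] [Module k C] [Coalgebra k C] [LieRing L] [LieAlgebra k L]
    (Δbar : ↥(LinearMap.ker (Coalgebra.counit : C →ₗ[k] k)) →ₗ[k]
      (↥(LinearMap.ker (Coalgebra.counit : C →ₗ[k] k)) ⊗[k]
        ↥(LinearMap.ker (Coalgebra.counit : C →ₗ[k] k))))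
    (n : ℕ) (f : ↥(LinearMap.ker (Coalgebra.counit : C →ₗ[k] k)) →ₗ[k] L)
    (hf : f ∈ lcsF k (fun f g => redConvBr Δbar f g) n)
    (c : ↥(LinearMap.ker (Coalgebra.counit : C →ₗ[k] k))) :
    f c ∈ lcsF k (fun x y : L => ⁅x, y⁆) n := by
  induction n generalizing f c with
  | zero => trivial
  | succ n ih =>
    refine Submodule.span_induction ?_ ?_ ?_ ?_ hf
    · rintro m ⟨x, y, hy, rfl⟩
      show lieBeta k L (TensorProduct.map x y (Δbar c)) ∈ _
      induction Δbar c using TensorProduct.induction_on with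
      | zero => simp
      | tmul a b =>
        simp only [TensorProduct.map_tmul]
        have : lieBeta k L (x a ⊗ₜ[k] y b) = ⁅x a, y b⁆ := by
          simp [lieBeta]
        rw [this]
        exact Submodule.subset_span ⟨x a, y b, ih y hy b, rfl⟩
      | add t₁ t₂ h₁ h₂ =>
        rw [map_add, map_add]
        exact Submodule.add_mem _ h₁ h₂
    · simp
    · intro f g _ _ hf hg
      rw [LinearMap.add_apply]
      exact Submodule.add_mem _ hf hg
    · intro a f _ hf
      rw [LinearMap.smul_apply]
      exact Submodule.smul_mem _ a hf

theorem reduced_convolution_nilpotent_of_nilpotent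
    (k C L : Type*) [Field k] [CharZero k]
    [AddCommGroup C] [Module k C] [Coalgebra k C]
    -- `C` is cocommutative:
    (hcc : (TensorProduct.comm k C C).toLinearMap ∘ₗ Coalgebra.comul =
      (Coalgebra.comul : C →ₗ[k] C ⊗[k] C))
    -- `e` is a grouplike coaugmentation:
    (e : C) (he1 : Coalgebra.comul e = e ⊗ₜ[k] e) (he2 : Coalgebra.counit e = (1 : k))
    [LieRing L] [LieAlgebra k L]
    -- `Δ̄ : C̄ → C̄ ⊗ C̄` is the reduced comultiplication:
    (Δbar : ↥(LinearMap.ker (Coalgebra.counit : C →ₗ[k] k)) →ₗ[k]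
      (↥(LinearMap.ker (Coalgebra.counit : C →ₗ[k] k)) ⊗[k]
        ↥(LinearMap.ker (Coalgebra.counit : C →ₗ[k] k))))
    (hΔbar : TensorProduct.map
        (LinearMap.ker (Coalgebra.counit : C →ₗ[k] k)).subtype
        (LinearMap.ker (Coalgebra.counit : C →ₗ[k] k)).subtype ∘ₗ Δbar =
      redComul k e ∘ₗ (LinearMap.ker (Coalgebra.counit : C →ₗ[k] k)).subtype)
    (n : ℕ)
    -- `L` is nilpotent of class at most `n`, i.e. `F^(n+1) L = 0`:
    (hL : lcsF k (fun x y : L => ⁅x, y⁆) n = ⊥) :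
    -- then `Hom_k(C̄, L)` is nilpotent of class at most `n`:
    lcsF k (fun f g : ↥(LinearMap.ker (Coalgebra.counit : C →ₗ[k] k)) →ₗ[k] L =>
      redConvBr Δbar f g) n = ⊥ := by
  refine le_bot_iff.mp fun f hf => ?_
  have : ∀ c, f c = 0 := fun c => by
    have := lcsF_eval_mem Δbar n f hf c
    rw [hL] at this
    simpa using this
  exact LinearMap.ext this
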